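/- (Componentwise comparison of SEIR solutions with the frozen linear flow.) Let S₀ ∈ ℝ and suppose S, E, I_1, …, I_N : ℝ → ℝ are differentiable, nonnegative, satisfy the SEIR system with N parallel infectious stages for all t ≥ t₀, and S(t) ≤ S₀ for all t ≥ t₀. Let V(t) = (E(t), I_1(t), …, I_N(t)) ∈ ℝ^{N+1}. Then for every t ≥ t₀, V(t) ≤ exp((t − t₀) L₀(S₀)) V(t₀) componentwise. -/

import Mathlib

open NormedSpace

/-- The `(N+1) × (N+1)` matrix `L₀(S₀)` of the frozen linearization: first row
`(−σ, β₁S₀, …, β_N S₀)`, first column `(−σ, x₁σ, …, x_N σ)ᵗ`, remaining diagonal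
entries `−γ` (with `γ = minᵢ γᵢ`), all other entries `0`. -/
noncomputable def L0 (N : ℕ) (σ γ : ℝ) (β x : Fin N → ℝ) (S : ℝ) :
    Matrix (Fin (N + 1)) (Fin (N + 1)) ℝ :=
  Matrix.of fun i j =>
    Fin.cases
      (Fin.cases (-σ) (fun k => β k * S) j)
      (fun k => Fin.cases (x k * σ) (fun l => if k = l then -γ else 0) j)
      i

section Helpers

variable {m : ℕ}

/-- Entry evaluation as a linear map on matrices. -/
private def entryLM (i j : Fin m) : Matrix (Fin m) (Fin m) ℝ →ₗ[ℝ] ℝ where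
  toFun P := P i j
  map_add' _ _ := rfl
  map_smul' _ _ := rfl

private lemma pow_entry_nonneg {M : Matrix (Fin m) (Fin m) ℝ} (hM : ∀ i j, 0 ≤ M i j) :
    ∀ (n : ℕ) (i j : Fin m), 0 ≤ (M ^ n) i j := by
  intro n
  induction n with
  | zero =>
    intro i j
    simp only [pow_zero, Matrix.one_apply]
    split <;> norm_num
  | succ n ih =>
    intro i j
    rw [pow_succ, Matrix.mul_apply]
    exact Finset.sum_nonneg fun k _ => mul_nonneg (ih i k) (hM k j)

private lemma exp_entry_nonneg {M : Matrix (Fin m) (Fin m) ℝ} (hM : ∀ i j, 0 ≤ M i j)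
    (i j : Fin m) : 0 ≤ exp M i j := by
  letI : SeminormedRing (Matrix (Fin m) (Fin m) ℝ) := Matrix.linftyOpSemiNormedRing
  letI : NormedRing (Matrix (Fin m) (Fin m) ℝ) := Matrix.linftyOpNormedRing
  letI : NormedAlgebra ℝ (Matrix (Fin m) (Fin m) ℝ) := Matrix.linftyOpNormedAlgebra
  have hs : Summable (fun n : ℕ => ((n.factorial : ℝ)⁻¹) • M ^ n) :=
    expSeries_summable' (𝕂 := ℝ) M
  have hmap : HasSum (fun n : ℕ => (((n.factorial : ℝ)⁻¹) • M ^ n) i j) (exp M i j) := by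
    have h1 : HasSum (fun n : ℕ => ((n.factorial : ℝ)⁻¹) • M ^ n) (exp M) := by
      rw [exp_eq_tsum ℝ]
      exact hs.hasSum
    exact h1.map (entryLM i j).toAddMonoidHom
      (entryLM i j).toContinuousLinearMap.continuous
  refine hasSum_le (fun n => ?_) hasSum_zero hmap
  simp only [Matrix.smul_apply, smul_eq_mul]
  exact mul_nonneg (by positivity) (pow_entry_nonneg hM n i j)

private lemma exp_add_smul_one (M : Matrix (Fin m) (Fin m) ℝ) (c : ℝ) :
    exp (M + c • (1 : Matrix (Fin m) (Fin m) ℝ)) = Real.exp c • exp M := by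
  have hcomm : Commute M (c • (1 : Matrix (Fin m) (Fin m) ℝ)) :=
    (Commute.one_right M).smul_right c
  rw [Matrix.exp_add_of_commute M _ hcomm]
  have h1 : exp (c • (1 : Matrix (Fin m) (Fin m) ℝ)) =
      Real.exp c • (1 : Matrix (Fin m) (Fin m) ℝ) := by
    rw [Matrix.smul_one_eq_diagonal, Matrix.exp_diagonal, Pi.exp_def,
      Matrix.smul_one_eq_diagonal]
    rw [show exp c = Real.exp c from (congrFun Real.exp_eq_exp_ℝ c).symm]
  rw [h1, mul_smul_comm, mul_one]

private lemma exp_smul_entry_nonneg {A : Matrix (Fin m) (Fin m) ℝ} {lam τ : ℝ}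
    (hτ : 0 ≤ τ) (hoff : ∀ i j, i ≠ j → 0 ≤ A i j) (hdiag : ∀ i, -lam ≤ A i i)
    (i j : Fin m) : 0 ≤ exp (τ • A) i j := by
  set M : Matrix (Fin m) (Fin m) ℝ := A + lam • (1 : Matrix (Fin m) (Fin m) ℝ) with hM
  have hsplit : τ • A = τ • M + (-(τ * lam)) • (1 : Matrix (Fin m) (Fin m) ℝ) := by
    rw [hM]; ext i j
    simp only [Matrix.add_apply, Matrix.smul_apply, smul_eq_mul, Matrix.one_apply]
    split <;> ring
  have hMnn : ∀ i j, 0 ≤ (τ • M) i j := by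
    intro i j
    rcases eq_or_ne i j with rfl | h
    · simp only [hM, Matrix.smul_apply, Matrix.add_apply, Matrix.one_apply_eq,
        smul_eq_mul, mul_one]
      have := hdiag i
      have : 0 ≤ A i i + lam := by linarith
      positivity
    · simp only [hM, Matrix.smul_apply, Matrix.add_apply, Matrix.one_apply_ne h,
        smul_eq_mul, mul_zero, add_zero]
      exact mul_nonneg hτ (hoff i j h)
  rw [hsplit, exp_add_smul_one, Matrix.smul_apply, smul_eq_mul]
  exact mul_nonneg (Real.exp_pos _).le (exp_entry_nonneg hMnn i j)

private lemma hasDerivAt_exp_entry (A : Matrix (Fin m) (Fin m) ℝ) (t s : ℝ) (i j : Fin m) :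
    HasDerivAt (fun u : ℝ => exp ((t - u) • A) i j)
      (-((exp ((t - s) • A) * A) i j)) s := by
  letI : SeminormedRing (Matrix (Fin m) (Fin m) ℝ) := Matrix.linftyOpSemiNormedRing
  letI : NormedRing (Matrix (Fin m) (Fin m) ℝ) := Matrix.linftyOpNormedRing
  letI : NormedAlgebra ℝ (Matrix (Fin m) (Fin m) ℝ) := Matrix.linftyOpNormedAlgebra
  have h1 : HasDerivAt (fun u : ℝ => exp (u • A)) (exp ((t - s) • A) * A) (t - s) :=
    hasDerivAt_exp_smul_const A (t - s)
  have h2 : HasDerivAt (fun u : ℝ => t - u) (-1 : ℝ) s := by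
    simpa using (hasDerivAt_id s).const_sub t
  have h3 : HasDerivAt (fun u : ℝ => exp ((t - u) • A))
      ((-1 : ℝ) • (exp ((t - s) • A) * A)) s := h1.scomp s h2
  have h4 := ((entryLM i j).toContinuousLinearMap.hasFDerivAt).comp_hasDerivAt s h3
  have h5 : HasDerivAt (fun u : ℝ => exp ((t - u) • A) i j)
      (((-1 : ℝ) • (exp ((t - s) • A) * A)) i j) s := h4
  simpa using h5

end Helpers

/-- Componentwise comparison of SEIR solutions with the frozen linear
flow: if the nonnegative solution satisfies `S(t) ≤ S₀` for `t ≥ t₀`, then the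
vector `V(t) = (E(t), I₁(t), …, I_N(t))` satisfies
`V(t) ≤ exp((t − t₀) L₀(S₀)) V(t₀)` componentwise for all `t ≥ t₀`. -/
theorem stmt_19
    (N : ℕ) [NeZero N]
    (σ : ℝ) (hσ : 0 < σ)
    (γ β x : Fin N → ℝ)
    (hγ : ∀ i, 0 < γ i) (hβ : ∀ i, 0 < β i) (hx : ∀ i, 0 < x i)
    (hxsum : ∑ i, x i = 1)
    (γmin : ℝ) (hγmin : γmin = Finset.univ.inf' Finset.univ_nonempty γ)
    (S₀ : ℝ)
    (S E : ℝ → ℝ) (I : Fin N → ℝ → ℝ) (t₀ : ℝ)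
    (hS : ∀ t ≥ t₀, HasDerivAt S (-(∑ i, β i * I i t) * S t) t)
    (hE : ∀ t ≥ t₀, HasDerivAt E ((∑ i, β i * I i t) * S t - σ * E t) t)
    (hI : ∀ i, ∀ t ≥ t₀, HasDerivAt (I i) (x i * σ * E t - γ i * I i t) t)
    (hSnn : ∀ t ≥ t₀, 0 ≤ S t) (hEnn : ∀ t ≥ t₀, 0 ≤ E t)
    (hInn : ∀ i, ∀ t ≥ t₀, 0 ≤ I i t)
    (hSle : ∀ t ≥ t₀, S t ≤ S₀) :
    ∀ t ≥ t₀, ∀ j : Fin (N + 1),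
      (Fin.cons (E t) (fun i => I i t) : Fin (N + 1) → ℝ) j
        ≤ (exp ((t - t₀) • L0 N σ γmin β x S₀)).mulVec
            (Fin.cons (E t₀) (fun i => I i t₀) : Fin (N + 1) → ℝ) j := by
  intro t ht j
  set A : Matrix (Fin (N + 1)) (Fin (N + 1)) ℝ := L0 N σ γmin β x S₀ with hA
  -- entries of A
  have hA00 : A 0 0 = -σ := rfl
  have hA0s : ∀ k : Fin N, A 0 k.succ = β k * S₀ := fun k => by
    simp [hA, L0]
  have hAs0 : ∀ k : Fin N, A k.succ 0 = x k * σ := fun k => by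
    simp [hA, L0]
  have hAss : ∀ k l : Fin N, A k.succ l.succ = if k = l then -γmin else 0 := fun k l => by
    simp [hA, L0]
  have hS₀ : 0 ≤ S₀ := le_trans (hSnn t₀ le_rfl) (hSle t₀ le_rfl)
  have hγminpos : 0 < γmin := by
    rw [hγmin]
    exact (Finset.lt_inf'_iff _).2 fun i _ => hγ i
  have hγminle : ∀ k, γmin ≤ γ k := fun k => by
    rw [hγmin]; exact Finset.inf'_le _ (Finset.mem_univ k)
  -- the vector of solutions and its derivative
  set Vf : Fin (N + 1) → ℝ → ℝ := Fin.cons E (fun i => I i) with hVf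
  set Df : Fin (N + 1) → ℝ → ℝ :=
    Fin.cons (fun s => (∑ i, β i * I i s) * S s - σ * E s)
      (fun k s => x k * σ * E s - γ k * I k s) with hDf
  have hVval : ∀ (s : ℝ) (k : Fin (N + 1)),
      Vf k s = (Fin.cons (E s) (fun i => I i s) : Fin (N + 1) → ℝ) k := by
    intro s k
    induction k using Fin.cases <;> simp [hVf]
  have hVd : ∀ (k : Fin (N + 1)) (s : ℝ), t₀ ≤ s → HasDerivAt (Vf k) (Df k s) s := by
    intro k s hs
    induction k using Fin.cases with
    | zero => simpa [hVf, hDf] using hE s hs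
    | succ i => simpa [hVf, hDf] using hI i s hs
  have hVnn : ∀ (k : Fin (N + 1)) (s : ℝ), t₀ ≤ s → 0 ≤ Vf k s := by
    intro k s hs
    induction k using Fin.cases with
    | zero => simpa [hVf] using hEnn s hs
    | succ i => simpa [hVf] using hInn i s hs
  -- key componentwise differential inequality
  have hkey : ∀ s : ℝ, t₀ ≤ s → ∀ l : Fin (N + 1),
      Df l s ≤ A.mulVec (fun k => Vf k s) l := by
    intro s hs l
    induction l using Fin.cases with
    | zero =>
      have hmv : A.mulVec (fun k => Vf k s) 0 = -σ * E s + ∑ i, β i * S₀ * I i s := by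
        simp only [Matrix.mulVec, dotProduct, Fin.sum_univ_succ, hA00]
        simp [hA0s, hVf]
      rw [hmv]
      simp only [hDf, Fin.cons_zero]
      have hsum : (∑ i, β i * I i s) * S s ≤ ∑ i, β i * S₀ * I i s := by
        rw [Finset.sum_mul]
        refine Finset.sum_le_sum fun i _ => ?_
        have h1 : β i * I i s * S s ≤ β i * I i s * S₀ :=
          mul_le_mul_of_nonneg_left (hSle s hs)
            (mul_nonneg (hβ i).le (hInn i s hs))
        nlinarith [h1]
      linarith
    | succ k =>
      have hmv : A.mulVec (fun k => Vf k s) k.succ = x k * σ * E s - γmin * I k s := by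
        simp only [Matrix.mulVec, dotProduct, Fin.sum_univ_succ]
        rw [hAs0]
        simp only [hAss, ite_mul, zero_mul, Finset.sum_ite_eq, Finset.mem_univ, if_true]
        simp [hVf]
        ring
      rw [hmv]
      simp only [hDf, Fin.cons_succ]
      have : γmin * I k s ≤ γ k * I k s :=
        mul_le_mul_of_nonneg_right (hγminle k) (hInn k s hs)
      linarith
  -- nonnegativity of the entries of the exponential
  have hexpnn : ∀ s : ℝ, s ≤ t → ∀ i k : Fin (N + 1), 0 ≤ exp ((t - s) • A) i k := by
    intro s hst i k
    refine exp_smul_entry_nonneg (lam := max σ γmin) (by linarith) ?_ ?_ i k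
    · intro i j hij
      induction i using Fin.cases with
      | zero =>
        induction j using Fin.cases with
        | zero => exact absurd rfl hij
        | succ l => rw [hA0s]; exact mul_nonneg (hβ l).le hS₀
      | succ p =>
        induction j using Fin.cases with
        | zero => rw [hAs0]; exact mul_nonneg (hx p).le hσ.le
        | succ q =>
          rw [hAss]
          have : p ≠ q := fun h => hij (by rw [h])
          simp [this]
    · intro i
      induction i using Fin.cases with
      | zero =>
        rw [hA00]
        exact neg_le_neg (le_max_left _ _)
      | succ p =>
        rw [hAss]
        simp only [if_pos rfl]
        exact neg_le_neg (le_max_right _ _)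
  -- the comparison function
  set φ : ℝ → ℝ := fun s => ∑ k, exp ((t - s) • A) j k * Vf k s with hφdef
  set ψ : ℝ → ℝ := fun s =>
    ∑ k, (-((exp ((t - s) • A) * A) j k) * Vf k s
      + exp ((t - s) • A) j k * Df k s) with hψdef
  have hφd : ∀ s : ℝ, t₀ ≤ s → HasDerivAt φ (ψ s) s := by
    intro s hs
    refine HasDerivAt.fun_sum fun k _ => ?_
    exact (hasDerivAt_exp_entry A t s j k).mul (hVd k s hs)
  have hψle : ∀ s : ℝ, t₀ ≤ s → s ≤ t → ψ s ≤ 0 := by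
    intro s hs hst
    have hsw : ∑ k, (exp ((t - s) • A) * A) j k * Vf k s
        = ∑ l, exp ((t - s) • A) j l * A.mulVec (fun k => Vf k s) l := by
      simp only [Matrix.mul_apply, Matrix.mulVec, dotProduct,
        Finset.sum_mul, Finset.mul_sum]
      rw [Finset.sum_comm]
      exact Finset.sum_congr rfl fun l _ => Finset.sum_congr rfl fun k _ => by ring
    have hsplit : ψ s = (∑ k, exp ((t - s) • A) j k * Df k s)
        - ∑ k, (exp ((t - s) • A) * A) j k * Vf k s := by
      simp only [hψdef]
      rw [Finset.sum_add_distrib]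
      ring_nf
      rw [Finset.sum_neg_distrib]
      ring
    rw [hsplit, hsw, sub_nonpos]
    refine Finset.sum_le_sum fun l _ => ?_
    exact mul_le_mul_of_nonneg_left (hkey s hs l) (hexpnn s hst j l)
  have hanti : AntitoneOn φ (Set.Icc t₀ t) := by
    refine antitoneOn_of_deriv_nonpos (convex_Icc t₀ t) ?_ ?_ ?_
    · intro s hs
      exact (hφd s hs.1).continuousAt.continuousWithinAt
    · intro s hs
      rw [interior_Icc] at hs
      exact (hφd s hs.1.le).differentiableAt.differentiableWithinAt
    · intro s hs
      rw [interior_Icc] at hs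
      rw [(hφd s hs.1.le).deriv]
      exact hψle s hs.1.le hs.2.le
  have hmain : φ t ≤ φ t₀ :=
    hanti (Set.left_mem_Icc.2 ht) (Set.right_mem_Icc.2 ht) ht
  have hφt : φ t = (Fin.cons (E t) (fun i => I i t) : Fin (N + 1) → ℝ) j := by
    rw [hφdef]
    simp only [sub_self, zero_smul, exp_zero, Matrix.one_apply, ite_mul, one_mul, zero_mul]
    rw [Finset.sum_ite_eq Finset.univ j (fun k => Vf k t)]
    simp [hVval t j]
  have hφt₀ : φ t₀ = (exp ((t - t₀) • A)).mulVec
      (Fin.cons (E t₀) (fun i => I i t₀) : Fin (N + 1) → ℝ) j := by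
    rw [hφdef]
    simp only [Matrix.mulVec, dotProduct]
    exact Finset.sum_congr rfl fun k _ => by rw [hVval t₀ k]
  rw [hφt, hφt₀] at hmain
  exact hmain
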